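/- There is an absolute constant C > 0 such that the following holds. Let H, N, W, q, s be positive integers with W \ge 10, q \in (W/2, W], 2^s \ge W and H \ge 2^s W^3, and let B \ge 10 be a real number. Let 𝒩 \subseteq \{1, ..., N\}; for every configuration 𝐧 = (n,k,j) with n \in 𝒩 let u_𝐧 : ℤ → ℂ satisfy |u_𝐧| \le 2, and let w(p₁,p₂) be complex numbers with |w| \le 1. For a configuration 𝐧₁ with first coordinate in 𝒩 and a prime p₁ \in (2^{s−1}, 2^s], let Ω_{𝐧₁,p₁} denote the set of pairs (𝐧₂, p₂) where 𝐧₂ = (n₂,k₂,j₂) is a configuration with n₂ \in 𝒩 and p₂ \in (2^{s−1}, 2^s] is prime, such that \#A_{𝐧₁,𝐧₂,p₁,p₂} \ge 2^{−s} W^{−(B+3)} H and |\sum_{l \in A_{𝐧₁,𝐧₂,p₁,p₂}} u_{𝐧₁}(p₁ l − n₁) \cdot conj(u_{𝐧₂}(p₂ l − n₂))| \ge W^{−B} \#A_{𝐧₁,𝐧₂,p₁,p₂}. Assume \#Ω_{𝐧₁,p₁} < 2^s W^{−B} H for every such pair (𝐧₁, p₁). Then |\sum_{𝐧₁,𝐧₂}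 \sum_{p₁,p₂ : \#A_{𝐧₁,𝐧₂,p₁,p₂} \ge 2^{−s} W^{−(B+3)} H} w(p₁,p₂) \sum_{l \in A_{𝐧₁,𝐧₂,p₁,p₂}} u_{𝐧₁}(p₁ l − n₁) \cdot conj(u_{𝐧₂}(p₂ l − n₂))| \le C \cdot 2^s \cdot W^{−B} \cdot H^2 \cdot N, where the configuration sums range over configurations with first coordinates in 𝒩 and the prime sums over primes p₁, p₂ \in (2^{s−1}, 2^s]. -/

import Mathlib

open Finset

/-- For a configuration `𝐧 = (n,k,j)` and `p`, the set
`A_{𝐧,p} = {l ∈ ℕ : pl − n ∈ I_k, pl ≡ j (mod q)}` with `I_k = ((k-1)W⁻²H, kW⁻²H]`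
(all its elements lie in `[1, n+H]`). -/
noncomputable def Aprog (H W q : ℕ) (c : ℕ × ℕ × ℕ) (p : ℕ) : Finset ℕ :=
  (Finset.Icc 1 (c.1 + H)).filter (fun l =>
    ((c.2.1 : ℝ) - 1) * H / (W : ℝ) ^ 2 < ((p * l : ℕ) : ℝ) - (c.1 : ℝ) ∧
    ((p * l : ℕ) : ℝ) - (c.1 : ℝ) ≤ (c.2.1 : ℝ) * H / (W : ℝ) ^ 2 ∧
    (p * l) % q = c.2.2)

/-- `A_{𝐧₁,𝐧₂,p₁,p₂} = A_{𝐧₁,p₁} ∩ A_{𝐧₂,p₂}`. -/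
noncomputable def Ainter (H W q : ℕ) (c₁ c₂ : ℕ × ℕ × ℕ) (p₁ p₂ : ℕ) : Finset ℕ :=
  Aprog H W q c₁ p₁ ∩ Aprog H W q c₂ p₂

/-- The configurations `(n,k,j)` with `n ∈ 𝒩`, `1 ≤ k ≤ W²`, `0 ≤ j ≤ q-1`. -/
def cfgs (𝒩 : Finset ℕ) (W q : ℕ) : Finset (ℕ × ℕ × ℕ) :=
  𝒩 ×ˢ (Finset.Icc 1 (W ^ 2) ×ˢ Finset.range q)

/-- The primes in `(2^{s-1}, 2^s]`. -/
def primesDya (s : ℕ) : Finset ℕ :=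
  (Finset.Ioc (2 ^ (s - 1)) (2 ^ s)).filter Nat.Prime

/-- The correlation sum `∑_{l ∈ A_{𝐧₁,𝐧₂,p₁,p₂}} u_{𝐧₁}(p₁l − n₁) conj(u_{𝐧₂}(p₂l − n₂))`. -/
noncomputable def corrSum (H W q : ℕ) (u : (ℕ × ℕ × ℕ) → ℤ → ℂ)
    (c₁ c₂ : ℕ × ℕ × ℕ) (p₁ p₂ : ℕ) : ℂ :=
  ∑ l ∈ Ainter H W q c₁ c₂ p₁ p₂,
    u c₁ ((p₁ : ℤ) * l - c₁.1) * (starRingEnd ℂ) (u c₂ ((p₂ : ℤ) * l - c₂.1))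

/-- The exceptional set `Ω_{𝐧₁,p₁}` of pairs `(𝐧₂, p₂)` such that
`#A_{𝐧₁,𝐧₂,p₁,p₂} ≥ 2^{-s} W^{-(B+3)} H` and the correlation sum is at least
`W^{-B} #A_{𝐧₁,𝐧₂,p₁,p₂}` in absolute value. -/
noncomputable def OmegaSet (H W q s : ℕ) (B : ℝ) (𝒩 : Finset ℕ)
    (u : (ℕ × ℕ × ℕ) → ℤ → ℂ) (c₁ : ℕ × ℕ × ℕ) (p₁ : ℕ) :
    Finset ((ℕ × ℕ × ℕ) × ℕ) :=
  (cfgs 𝒩 W q ×ˢ primesDya s).filter (fun x =>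
    (2 : ℝ) ^ (-(s : ℝ)) * (W : ℝ) ^ (-(B + 3)) * H
        ≤ ((Ainter H W q c₁ x.1 p₁ x.2).card : ℝ) ∧
    (W : ℝ) ^ (-B) * ((Ainter H W q c₁ x.1 p₁ x.2).card : ℝ)
        ≤ ‖corrSum H W q u c₁ x.1 p₁ x.2‖)

/-- If every exceptional set `Ω_{𝐧₁,p₁}` is small, then the contribution of the
quadruples with `#A_{𝐧₁,𝐧₂,p₁,p₂} ≥ 2^{-s} W^{-(B+3)} H` is at most
`C 2^s W^{-B} H² N`. -/
lemma Aprog_unique {H W q : ℕ} (hW : 0 < W) {n k j k' j' p l : ℕ}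
    (h1 : l ∈ Aprog H W q (n,k,j) p) (h2 : l ∈ Aprog H W q (n,k',j') p) :
    k = k' ∧ j = j' := by
  rw [Aprog, Finset.mem_filter] at h1 h2
  obtain ⟨-, hk1, hk1', hj1⟩ := h1
  obtain ⟨-, hk2, hk2', hj2⟩ := h2
  have hW' : (0:ℝ) < (W:ℝ)^2 := by positivity
  set x : ℝ := ((p * l : ℕ) : ℝ) - (n : ℝ) with hx
  have e1 := (div_lt_iff₀ hW').mp hk1
  have e1' := (le_div_iff₀ hW').mp hk1'
  have e2 := (div_lt_iff₀ hW').mp hk2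
  have e2' := (le_div_iff₀ hW').mp hk2'
  constructor
  · by_contra hne
    rcases Nat.lt_or_ge k k' with h | h
    · have hc : (k:ℝ) ≤ (k':ℝ) - 1 := by
        have : (k:ℝ) + 1 ≤ (k':ℝ) := by exact_mod_cast h
        linarith
      have hH : (0:ℝ) ≤ (H:ℝ) := Nat.cast_nonneg _
      nlinarith
    · have h' : k' < k := lt_of_le_of_ne h (Ne.symm hne)
      have hc : (k':ℝ) ≤ (k:ℝ) - 1 := by
        have : (k':ℝ) + 1 ≤ (k:ℝ) := by exact_mod_cast h'
        linarith
      have hH : (0:ℝ) ≤ (H:ℝ) := Nat.cast_nonneg _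
      nlinarith
  · simpa using hj1.symm.trans hj2
lemma Aprog_range {H W q : ℕ} (hW : 0 < W) {n k j p l : ℕ}
    (hk1 : 1 ≤ k) (hk2 : k ≤ W ^ 2) (hl : l ∈ Aprog H W q (n,k,j) p) :
    n < p * l ∧ p * l ≤ n + H := by
  rw [Aprog, Finset.mem_filter] at hl
  obtain ⟨-, ha, hb, -⟩ := hl
  have hW' : (0:ℝ) < (W:ℝ)^2 := by positivity
  have e1 := (div_lt_iff₀ hW').mp ha
  have e2 := (le_div_iff₀ hW').mp hb
  have hkr : (1:ℝ) ≤ (k:ℝ) := by exact_mod_cast hk1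
  have hkr2 : (k:ℝ) ≤ (W:ℝ)^2 := by exact_mod_cast hk2
  have hH : (0:ℝ) ≤ (H:ℝ) := Nat.cast_nonneg _
  constructor
  · have : (n:ℝ) < ((p*l : ℕ):ℝ) := by nlinarith
    exact_mod_cast this
  · have : ((p*l : ℕ):ℝ) ≤ (n:ℝ) + H := by nlinarith
    exact_mod_cast this

lemma mem_cfgs {𝒩 : Finset ℕ} {W q : ℕ} {c : ℕ × ℕ × ℕ} :
    c ∈ cfgs 𝒩 W q ↔ c.1 ∈ 𝒩 ∧ (1 ≤ c.2.1 ∧ c.2.1 ≤ W ^ 2) ∧ c.2.2 < q := by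
  simp [cfgs, Finset.mem_product, Finset.mem_Icc, Finset.mem_range, and_assoc]

lemma count_cfgs_le {H W q : ℕ} (hW : 0 < W) (𝒩 : Finset ℕ) (p l : ℕ) :
    ((cfgs 𝒩 W q).filter (fun c => l ∈ Aprog H W q c p)).card ≤ H := by
  have : ((cfgs 𝒩 W q).filter (fun c => l ∈ Aprog H W q c p)).card
      ≤ (Finset.Ico (p * l - H) (p * l)).card := by
    apply Finset.card_le_card_of_injOn (fun c => c.1)
    · intro c hc
      rw [Finset.mem_coe, Finset.mem_filter] at hc
      obtain ⟨hc1, hc2⟩ := hc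
      obtain ⟨n, k, j⟩ := c
      rw [mem_cfgs] at hc1
      have := Aprog_range hW hc1.2.1.1 hc1.2.1.2 hc2
      simp only [Finset.mem_coe, Finset.mem_Ico]
      omega
    · intro c hc c' hc' hcc
      simp only [Finset.coe_filter, Set.mem_setOf_eq] at hc hc'
      obtain ⟨n, k, j⟩ := c
      obtain ⟨n', k', j'⟩ := c'
      simp only at hcc
      subst hcc
      have := Aprog_unique hW hc.2 hc'.2
      simp [this.1, this.2]
  rw [Nat.card_Ico] at this
  omega
lemma sum_kj_card_le {H W q s : ℕ} (hW : 0 < W) {n p : ℕ} (hp : 2^(s-1) < p) :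
    ∑ kj ∈ Finset.Icc 1 (W^2) ×ˢ Finset.range q, (Aprog H W q (n, kj) p).card
      ≤ H / 2^(s-1) + 1 := by
  have hp0 : 0 < p := lt_of_le_of_lt (Nat.zero_le _) hp
  set S : Finset ℕ := Finset.Ioc (n / p) ((n + H) / p) with hS
  have hsub : ∀ kj ∈ Finset.Icc 1 (W^2) ×ˢ Finset.range q,
      Aprog H W q (n, kj) p ⊆ S := by
    rintro ⟨k, j⟩ hkj l hl
    rw [Finset.mem_product, Finset.mem_Icc] at hkj
    have hr := Aprog_range hW hkj.1.1 hkj.1.2 hl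
    rw [hS, Finset.mem_Ioc]
    constructor
    · rw [Nat.div_lt_iff_lt_mul hp0]
      calc n < p * l := hr.1
        _ = l * p := Nat.mul_comm _ _
    · rw [Nat.le_div_iff_mul_le hp0]
      calc l * p = p * l := Nat.mul_comm _ _
        _ ≤ n + H := hr.2
  have h1 : ∑ kj ∈ Finset.Icc 1 (W^2) ×ˢ Finset.range q, (Aprog H W q (n, kj) p).card
      ≤ S.card := by
    calc ∑ kj ∈ Finset.Icc 1 (W^2) ×ˢ Finset.range q, (Aprog H W q (n, kj) p).card
        = ∑ kj ∈ Finset.Icc 1 (W^2) ×ˢ Finset.range q,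
            ∑ l ∈ S, (if l ∈ Aprog H W q (n, kj) p then 1 else 0) := by
          refine Finset.sum_congr rfl fun kj hkj => ?_
          rw [← Finset.card_filter, Finset.filter_mem_eq_inter,
            Finset.inter_eq_right.mpr (hsub kj hkj)]
      _ = ∑ l ∈ S, ∑ kj ∈ Finset.Icc 1 (W^2) ×ˢ Finset.range q,
            (if l ∈ Aprog H W q (n, kj) p then 1 else 0) := Finset.sum_comm
      _ ≤ ∑ l ∈ S, 1 := by
          refine Finset.sum_le_sum fun l _ => ?_
          rw [← Finset.card_filter]
          refine Finset.card_le_one.mpr ?_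
          rintro ⟨k, j⟩ ha ⟨k', j'⟩ hb
          rw [Finset.mem_filter] at ha hb
          have := Aprog_unique hW ha.2 hb.2
          simp [this.1, this.2]
      _ = S.card := by simp
  refine h1.trans ?_
  have hcard : S.card = (n+H)/p - n/p := by rw [hS, Nat.card_Ioc]
  have hd2 : H / p ≤ H / 2^(s-1) := Nat.div_le_div_left (le_of_lt hp) (Nat.pow_pos (by norm_num))
  have hd3 : (n+H)/p ≤ n/p + H/p + 1 := by
    rw [Nat.add_div hp0]; split <;> omega
  have h4 : S.card ≤ H/p + 1 := by
    rw [hcard]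
    exact Nat.sub_le_iff_le_add.mpr (le_of_le_of_eq hd3 (by ring))
  exact h4.trans (Nat.add_le_add_right hd2 1)

lemma cardP_le {s : ℕ} (hs : 1 ≤ s) : (primesDya s).card ≤ 2^(s-1) := by
  refine (Finset.card_filter_le _ _).trans ?_
  rw [Nat.card_Ioc]
  have h2 : 2^(s-1+1) = 2^(s-1)*2 := pow_succ 2 (s-1)
  rw [Nat.sub_add_cancel hs] at h2
  omega
lemma ML1 {H W q s N : ℕ} (hW : 0 < W) (hs : 1 ≤ s) (hH : 2^s ≤ H)
    (𝒩 : Finset ℕ) (h𝒩 : 𝒩 ⊆ Finset.Icc 1 N) :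
    ∑ c₁ ∈ cfgs 𝒩 W q, ∑ p₁ ∈ primesDya s, (Aprog H W q c₁ p₁).card ≤ 2 * N * H := by
  rw [cfgs, Finset.sum_product]
  have hinner : ∀ n ∈ 𝒩,
      ∑ kj ∈ Finset.Icc 1 (W^2) ×ˢ Finset.range q, ∑ p ∈ primesDya s,
        (Aprog H W q (n, kj) p).card ≤ 2 * H := by
    intro n _
    rw [Finset.sum_comm]
    have h1 : ∀ p ∈ primesDya s,
        ∑ kj ∈ Finset.Icc 1 (W^2) ×ˢ Finset.range q, (Aprog H W q (n, kj) p).card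
          ≤ H / 2^(s-1) + 1 := by
      intro p hp
      rw [primesDya, Finset.mem_filter, Finset.mem_Ioc] at hp
      exact sum_kj_card_le hW hp.1.1
    refine (Finset.sum_le_sum h1).trans ?_
    rw [Finset.sum_const, smul_eq_mul]
    have h2 := cardP_le hs
    have h3 : 2^(s-1) * (H / 2^(s-1)) ≤ H := Nat.mul_div_le H (2^(s-1))
    have h4 : 2^(s-1) ≤ H := le_trans (Nat.pow_le_pow_right (by norm_num) (Nat.sub_le s 1)) hH
    calc (primesDya s).card * (H / 2^(s-1) + 1)
        ≤ 2^(s-1) * (H / 2^(s-1) + 1) := Nat.mul_le_mul_right _ h2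
      _ = 2^(s-1) * (H / 2^(s-1)) + 2^(s-1) := by ring
      _ ≤ H + H := Nat.add_le_add h3 h4
      _ = 2 * H := by ring
  refine (Finset.sum_le_sum hinner).trans ?_
  rw [Finset.sum_const, smul_eq_mul]
  have : 𝒩.card ≤ N := le_trans (Finset.card_le_card h𝒩) (by simp)
  calc 𝒩.card * (2 * H) ≤ N * (2 * H) := Nat.mul_le_mul_right _ this
    _ = 2 * N * H := by ring

lemma NB1 {H W q s : ℕ} (hW : 0 < W) (𝒩 : Finset ℕ) (c₁ : ℕ×ℕ×ℕ) (p₁ : ℕ) :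
    ∑ c₂ ∈ cfgs 𝒩 W q, ∑ p₂ ∈ primesDya s, (Ainter H W q c₁ c₂ p₁ p₂).card
      ≤ (primesDya s).card * ((Aprog H W q c₁ p₁).card * H) := by
  rw [Finset.sum_comm]
  refine (Finset.sum_le_sum ?_).trans (by rw [Finset.sum_const, smul_eq_mul])
  intro p₂ _
  calc ∑ c₂ ∈ cfgs 𝒩 W q, (Ainter H W q c₁ c₂ p₁ p₂).card
      = ∑ c₂ ∈ cfgs 𝒩 W q, ∑ l ∈ Aprog H W q c₁ p₁,
          (if l ∈ Aprog H W q c₂ p₂ then 1 else 0) := by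
        refine Finset.sum_congr rfl fun c₂ _ => ?_
        rw [← Finset.card_filter, Ainter, Finset.filter_mem_eq_inter]
    _ = ∑ l ∈ Aprog H W q c₁ p₁, ∑ c₂ ∈ cfgs 𝒩 W q,
          (if l ∈ Aprog H W q c₂ p₂ then 1 else 0) := Finset.sum_comm
    _ ≤ ∑ l ∈ Aprog H W q c₁ p₁, H := by
        refine Finset.sum_le_sum fun l _ => ?_
        rw [← Finset.card_filter]
        exact count_cfgs_le hW 𝒩 p₂ l
    _ = (Aprog H W q c₁ p₁).card * H := by rw [Finset.sum_const, smul_eq_mul]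

lemma normCorr_le {H W q : ℕ} {u : (ℕ × ℕ × ℕ) → ℤ → ℂ} {c₁ c₂ : ℕ×ℕ×ℕ} {p₁ p₂ : ℕ}
    (h1 : ∀ z, ‖u c₁ z‖ ≤ 2) (h2 : ∀ z, ‖u c₂ z‖ ≤ 2) :
    ‖corrSum H W q u c₁ c₂ p₁ p₂‖ ≤ 4 * ((Ainter H W q c₁ c₂ p₁ p₂).card : ℝ) := by
  refine (norm_sum_le _ _).trans ?_
  have : ∀ l ∈ Ainter H W q c₁ c₂ p₁ p₂,
      ‖u c₁ ((p₁ : ℤ) * l - c₁.1) * (starRingEnd ℂ) (u c₂ ((p₂ : ℤ) * l - c₂.1))‖ ≤ 4 := by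
    intro l _
    rw [norm_mul, RCLike.norm_conj]
    have a1 := h1 ((p₁ : ℤ) * l - c₁.1)
    have a2 := h2 ((p₂ : ℤ) * l - c₂.1)
    nlinarith [norm_nonneg (u c₁ ((p₁ : ℤ) * l - c₁.1)), norm_nonneg (u c₂ ((p₂ : ℤ) * l - c₂.1))]
  refine (Finset.sum_le_sum this).trans ?_
  rw [Finset.sum_const, nsmul_eq_mul]
  ring_nf
  exact le_refl _
theorem stmt15 :
    ∃ C : ℝ, 0 < C ∧
      ∀ (H N W q s : ℕ) (B : ℝ), 0 < H → 0 < N → 10 ≤ W →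
        (W : ℝ) / 2 < (q : ℝ) → q ≤ W → W ≤ 2 ^ s → 2 ^ s * W ^ 3 ≤ H → 10 ≤ B →
        ∀ 𝒩 : Finset ℕ, 𝒩 ⊆ Finset.Icc 1 N →
        ∀ u : (ℕ × ℕ × ℕ) → ℤ → ℂ,
          (∀ c ∈ cfgs 𝒩 W q, ∀ z : ℤ, ‖u c z‖ ≤ 2) →
        ∀ w : ℕ → ℕ → ℂ, (∀ p₁ p₂, ‖w p₁ p₂‖ ≤ 1) →
        (∀ c₁ ∈ cfgs 𝒩 W q, ∀ p₁ ∈ primesDya s,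
            ((OmegaSet H W q s B 𝒩 u c₁ p₁).card : ℝ)
              < 2 ^ s * (W : ℝ) ^ (-B) * H) →
          ‖∑ c₁ ∈ cfgs 𝒩 W q, ∑ c₂ ∈ cfgs 𝒩 W q,
              ∑ p₁ ∈ primesDya s, ∑ p₂ ∈ primesDya s,
                (if (2 : ℝ) ^ (-(s : ℝ)) * (W : ℝ) ^ (-(B + 3)) * H
                    ≤ ((Ainter H W q c₁ c₂ p₁ p₂).card : ℝ)
                 then w p₁ p₂ * corrSum H W q u c₁ c₂ p₁ p₂
                 else 0)‖
            ≤ C * 2 ^ s * (W : ℝ) ^ (-B) * (H : ℝ) ^ 2 * (N : ℝ) := by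
  refine ⟨10, by norm_num, ?_⟩
  intro H N W q s B hH hN hW hq1 hq2 hWs hHs hB 𝒩 h𝒩 u hu w hw hΩ
  have hW0 : 0 < W := by omega
  have hs1 : 1 ≤ s := by
    by_contra h
    have hs0 : s = 0 := by omega
    rw [hs0] at hWs
    norm_num at hWs
    omega
  have hWB : (0:ℝ) < (W:ℝ)^(-B) := by
    apply Real.rpow_pos_of_pos
    exact_mod_cast hW0
  have h2s : (0:ℝ) < (2:ℝ)^s := by positivity
  have hH0 : (0:ℝ) < (H:ℝ) := by exact_mod_cast hH
  have hKpos : (0:ℝ) < (2:ℝ)^s * (W:ℝ)^(-B) * H := by positivity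
  -- the per-(c₁,p₁) bound
  have key : ∀ c₁ ∈ cfgs 𝒩 W q, ∀ p₁ ∈ primesDya s,
      (∑ c₂ ∈ cfgs 𝒩 W q, ∑ p₂ ∈ primesDya s,
        ‖(if (2 : ℝ) ^ (-(s : ℝ)) * (W : ℝ) ^ (-(B + 3)) * H
              ≤ ((Ainter H W q c₁ c₂ p₁ p₂).card : ℝ)
           then w p₁ p₂ * corrSum H W q u c₁ c₂ p₁ p₂
           else 0)‖)
      ≤ 5 * ((2:ℝ)^s * (W:ℝ)^(-B) * H) * ((Aprog H W q c₁ p₁).card : ℝ) := by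
    intro c₁ hc₁ p₁ hp₁
    have step1 : ∀ c₂ ∈ cfgs 𝒩 W q, ∀ p₂ ∈ primesDya s,
        ‖(if (2 : ℝ) ^ (-(s : ℝ)) * (W : ℝ) ^ (-(B + 3)) * H
              ≤ ((Ainter H W q c₁ c₂ p₁ p₂).card : ℝ)
           then w p₁ p₂ * corrSum H W q u c₁ c₂ p₁ p₂
           else 0)‖
        ≤ (W:ℝ)^(-B) * ((Ainter H W q c₁ c₂ p₁ p₂).card : ℝ)
          + (if (c₂,p₂) ∈ OmegaSet H W q s B 𝒩 u c₁ p₁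
             then 4 * ((Ainter H W q c₁ c₂ p₁ p₂).card : ℝ) else 0) := by
      intro c₂ hc₂ p₂ hp₂
      have hAA : (0:ℝ) ≤ ((Ainter H W q c₁ c₂ p₁ p₂).card : ℝ) := Nat.cast_nonneg _
      have hWBA : (0:ℝ) ≤ (W:ℝ)^(-B) * ((Ainter H W q c₁ c₂ p₁ p₂).card : ℝ) := by positivity
      by_cases hthr : (2 : ℝ) ^ (-(s : ℝ)) * (W : ℝ) ^ (-(B + 3)) * H
          ≤ ((Ainter H W q c₁ c₂ p₁ p₂).card : ℝ)
      · rw [if_pos hthr]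
        have hcorr4 : ‖corrSum H W q u c₁ c₂ p₁ p₂‖
            ≤ 4 * ((Ainter H W q c₁ c₂ p₁ p₂).card : ℝ) :=
          normCorr_le (hu c₁ hc₁) (hu c₂ hc₂)
        have hwc : ‖w p₁ p₂ * corrSum H W q u c₁ c₂ p₁ p₂‖
            ≤ ‖corrSum H W q u c₁ c₂ p₁ p₂‖ := by
          rw [norm_mul]
          calc ‖w p₁ p₂‖ * ‖corrSum H W q u c₁ c₂ p₁ p₂‖
              ≤ 1 * ‖corrSum H W q u c₁ c₂ p₁ p₂‖ :=
                mul_le_mul_of_nonneg_right (hw p₁ p₂) (norm_nonneg _)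
            _ = _ := one_mul _
        by_cases hmem : (c₂,p₂) ∈ OmegaSet H W q s B 𝒩 u c₁ p₁
        · rw [if_pos hmem]
          linarith
        · rw [if_neg hmem]
          have hnb : ¬ ((W:ℝ)^(-B) * ((Ainter H W q c₁ c₂ p₁ p₂).card : ℝ)
              ≤ ‖corrSum H W q u c₁ c₂ p₁ p₂‖) := by
            intro hbig
            exact hmem (by
              rw [OmegaSet, Finset.mem_filter]
              exact ⟨Finset.mem_product.mpr ⟨hc₂, hp₂⟩, hthr, hbig⟩)
          have := lt_of_not_ge hnb
          linarith
      · rw [if_neg hthr, norm_zero]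
        split_ifs with h
        · positivity
        · linarith
    refine (Finset.sum_le_sum fun c₂ hc₂ => Finset.sum_le_sum fun p₂ hp₂ =>
      step1 c₂ hc₂ p₂ hp₂).trans ?_
    rw [show (∑ c₂ ∈ cfgs 𝒩 W q, ∑ p₂ ∈ primesDya s,
        ((W:ℝ)^(-B) * ((Ainter H W q c₁ c₂ p₁ p₂).card : ℝ)
          + (if (c₂,p₂) ∈ OmegaSet H W q s B 𝒩 u c₁ p₁
             then 4 * ((Ainter H W q c₁ c₂ p₁ p₂).card : ℝ) else 0)))
      = (∑ c₂ ∈ cfgs 𝒩 W q, ∑ p₂ ∈ primesDya s,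
          (W:ℝ)^(-B) * ((Ainter H W q c₁ c₂ p₁ p₂).card : ℝ))
        + (∑ c₂ ∈ cfgs 𝒩 W q, ∑ p₂ ∈ primesDya s,
          (if (c₂,p₂) ∈ OmegaSet H W q s B 𝒩 u c₁ p₁
             then 4 * ((Ainter H W q c₁ c₂ p₁ p₂).card : ℝ) else 0))
      from by rw [← Finset.sum_add_distrib]; exact Finset.sum_congr rfl fun _ _ => Finset.sum_add_distrib]
    -- part 1
    have part1 : (∑ c₂ ∈ cfgs 𝒩 W q, ∑ p₂ ∈ primesDya s,
          (W:ℝ)^(-B) * ((Ainter H W q c₁ c₂ p₁ p₂).card : ℝ))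
        ≤ (W:ℝ)^(-B) * ((2:ℝ)^s * (((Aprog H W q c₁ p₁).card : ℝ) * H)) := by
      simp only [← Finset.mul_sum]
      apply mul_le_mul_of_nonneg_left _ (le_of_lt hWB)
      have hnat := NB1 (H := H) (q := q) (s := s) hW0 𝒩 c₁ p₁
      have hcast : (∑ c₂ ∈ cfgs 𝒩 W q, ∑ p₂ ∈ primesDya s,
          ((Ainter H W q c₁ c₂ p₁ p₂).card : ℝ))
          ≤ (((primesDya s).card : ℝ) * (((Aprog H W q c₁ p₁).card : ℝ) * H)) := by
        exact_mod_cast hnat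
      refine hcast.trans ?_
      have hc1 : ((primesDya s).card : ℝ) ≤ (2:ℝ)^s := by
        have := cardP_le hs1
        have h2 : (2:ℕ)^(s-1) ≤ 2^s := Nat.pow_le_pow_right (by norm_num) (Nat.sub_le s 1)
        exact_mod_cast le_trans this h2
      apply mul_le_mul_of_nonneg_right hc1
      positivity
    -- part 2
    have part2 : (∑ c₂ ∈ cfgs 𝒩 W q, ∑ p₂ ∈ primesDya s,
          (if (c₂,p₂) ∈ OmegaSet H W q s B 𝒩 u c₁ p₁
             then 4 * ((Ainter H W q c₁ c₂ p₁ p₂).card : ℝ) else 0))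
        ≤ ((2:ℝ)^s * (W:ℝ)^(-B) * H) * (4 * ((Aprog H W q c₁ p₁).card : ℝ)) := by
      have hb : ∀ c₂ ∈ cfgs 𝒩 W q, ∀ p₂ ∈ primesDya s,
          (if (c₂,p₂) ∈ OmegaSet H W q s B 𝒩 u c₁ p₁
             then 4 * ((Ainter H W q c₁ c₂ p₁ p₂).card : ℝ) else 0)
          ≤ (if (c₂,p₂) ∈ OmegaSet H W q s B 𝒩 u c₁ p₁
             then 4 * ((Aprog H W q c₁ p₁).card : ℝ) else 0) := by
        intro c₂ _ p₂ _
        split_ifs with h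
        · have : (Ainter H W q c₁ c₂ p₁ p₂).card ≤ (Aprog H W q c₁ p₁).card :=
            Finset.card_le_card (Finset.inter_subset_left)
          have : ((Ainter H W q c₁ c₂ p₁ p₂).card : ℝ) ≤ ((Aprog H W q c₁ p₁).card : ℝ) := by
            exact_mod_cast this
          linarith
        · exact le_refl _
      refine (Finset.sum_le_sum fun c₂ hc₂ => Finset.sum_le_sum fun p₂ hp₂ =>
        hb c₂ hc₂ p₂ hp₂).trans ?_
      rw [← Finset.sum_product']
      simp only [Prod.mk.eta]
      have hsub : OmegaSet H W q s B 𝒩 u c₁ p₁ ⊆ cfgs 𝒩 W q ×ˢ primesDya s := by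
        rw [OmegaSet]; exact Finset.filter_subset _ _
      rw [Finset.sum_ite_mem, Finset.inter_eq_right.mpr hsub,
        Finset.sum_const, nsmul_eq_mul]
      have h4A : (0:ℝ) ≤ 4 * ((Aprog H W q c₁ p₁).card : ℝ) := by positivity
      exact mul_le_mul_of_nonneg_right (le_of_lt (hΩ c₁ hc₁ p₁ hp₁)) h4A
    calc _ ≤ (W:ℝ)^(-B) * ((2:ℝ)^s * (((Aprog H W q c₁ p₁).card : ℝ) * H))
        + ((2:ℝ)^s * (W:ℝ)^(-B) * H) * (4 * ((Aprog H W q c₁ p₁).card : ℝ)) :=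
        add_le_add part1 part2
      _ = 5 * ((2:ℝ)^s * (W:ℝ)^(-B) * H) * ((Aprog H W q c₁ p₁).card : ℝ) := by ring
  -- total
  have h2sH : 2^s ≤ H := by
    refine le_trans ?_ hHs
    have : 0 < W^3 := by positivity
    exact Nat.le_mul_of_pos_right _ this
  have hM := ML1 (q := q) hW0 hs1 h2sH 𝒩 h𝒩
  calc ‖∑ c₁ ∈ cfgs 𝒩 W q, ∑ c₂ ∈ cfgs 𝒩 W q,
              ∑ p₁ ∈ primesDya s, ∑ p₂ ∈ primesDya s,
                (if (2 : ℝ) ^ (-(s : ℝ)) * (W : ℝ) ^ (-(B + 3)) * H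
                    ≤ ((Ainter H W q c₁ c₂ p₁ p₂).card : ℝ)
                 then w p₁ p₂ * corrSum H W q u c₁ c₂ p₁ p₂
                 else 0)‖
      ≤ ∑ c₁ ∈ cfgs 𝒩 W q, ∑ c₂ ∈ cfgs 𝒩 W q,
              ∑ p₁ ∈ primesDya s, ∑ p₂ ∈ primesDya s,
                ‖(if (2 : ℝ) ^ (-(s : ℝ)) * (W : ℝ) ^ (-(B + 3)) * H
                    ≤ ((Ainter H W q c₁ c₂ p₁ p₂).card : ℝ)
                 then w p₁ p₂ * corrSum H W q u c₁ c₂ p₁ p₂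
                 else 0)‖ := by
        refine (norm_sum_le _ _).trans (Finset.sum_le_sum fun c₁ _ => ?_)
        refine (norm_sum_le _ _).trans (Finset.sum_le_sum fun c₂ _ => ?_)
        refine (norm_sum_le _ _).trans (Finset.sum_le_sum fun p₁ _ => ?_)
        exact norm_sum_le _ _
    _ = ∑ c₁ ∈ cfgs 𝒩 W q, ∑ p₁ ∈ primesDya s, ∑ c₂ ∈ cfgs 𝒩 W q,
              ∑ p₂ ∈ primesDya s,
                ‖(if (2 : ℝ) ^ (-(s : ℝ)) * (W : ℝ) ^ (-(B + 3)) * H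
                    ≤ ((Ainter H W q c₁ c₂ p₁ p₂).card : ℝ)
                 then w p₁ p₂ * corrSum H W q u c₁ c₂ p₁ p₂
                 else 0)‖ :=
        Finset.sum_congr rfl fun c₁ _ => Finset.sum_comm
    _ ≤ ∑ c₁ ∈ cfgs 𝒩 W q, ∑ p₁ ∈ primesDya s,
          5 * ((2:ℝ)^s * (W:ℝ)^(-B) * H) * ((Aprog H W q c₁ p₁).card : ℝ) :=
        Finset.sum_le_sum fun c₁ hc₁ => Finset.sum_le_sum fun p₁ hp₁ => key c₁ hc₁ p₁ hp₁
    _ = 5 * ((2:ℝ)^s * (W:ℝ)^(-B) * H)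
          * ((∑ c₁ ∈ cfgs 𝒩 W q, ∑ p₁ ∈ primesDya s, (Aprog H W q c₁ p₁).card : ℕ) : ℝ) := by
        simp only [← Finset.mul_sum]
        push_cast
        ring
    _ ≤ 5 * ((2:ℝ)^s * (W:ℝ)^(-B) * H) * ((2 * N * H : ℕ) : ℝ) := by
        apply mul_le_mul_of_nonneg_left _ (by positivity)
        exact_mod_cast hM
    _ = 10 * 2 ^ s * (W : ℝ) ^ (-B) * (H : ℝ) ^ 2 * (N : ℝ) := by
        push_cast
        ring
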